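/- Let p ∈ (2,3), q ≥ p with 2/p + 1/q > 1, and r with 1/r = 1/p + 1/q. Let S ∈ D^p([0,T];ℝ^d), let (F,F') ∈ 𝒱^{q,r}_S be a controlled path with remainder R, and let P^n = {0 = t^n_0 < ⋯ < t^n_{N_n} = T}, n ∈ ℕ, be partitions of [0,T]. Define the discretizations S^n_t := S_T·1_{{T}}(t) + Σ_k S_{t^n_k}·1_{[t^n_k,t^n_{k+1})}(t) and F^n_t := F_T·1_{{T}}(t) + Σ_k F_{t^n_k}·1_{[t^n_k,t^n_{k+1})}(t), and set R^n_{s,t} := F^n_{s,t} − F'_s S^n_{s,t} for (s,t) ∈ Δ_{[0,T]}. Then there exists a constant C depending only on p, q and r such that, for every n ∈ ℕ and every finite partition P of [0,T], Σ_{[s,t]∈P} |R^n_{s,t}|^r ≤ C(‖R‖_{r,[0,T]}^r + ‖F'‖_{q,[0,T]}^q + ‖S‖_{p,[0,T]}^p); in particular ‖R^n‖_{r,[0,T]} is bounded uniformly in n. -/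

import Mathlib

open Set Filter MeasureTheory
open scoped Topology InnerProductSpace BigOperators

noncomputable section

/-- `ℝ^d` with the Euclidean norm. -/
abbrev Vec (d : ℕ) := EuclideanSpace ℝ (Fin d)

/-- `ℝ^{d×d}` with the Euclidean (Frobenius) norm. -/
abbrev Mat (d : ℕ) := EuclideanSpace ℝ (Fin d × Fin d)

def mkVec {d : ℕ} (f : Fin d → ℝ) : Vec d := (WithLp.equiv 2 (Fin d → ℝ)).symm f

def mkMat {d : ℕ} (f : Fin d × Fin d → ℝ) : Mat d := (WithLp.equiv 2 (Fin d × Fin d → ℝ)).symm f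

/-- The tensor product `a ⊗ b` of two vectors, as a `d × d` matrix. -/
def tensor {d : ℕ} (a b : Vec d) : Mat d := mkMat (fun ij => a ij.1 * b ij.2)

/-- A matrix (an element of `L(ℝ^d, ℝ^d)`) applied to a vector. -/
def matApply {d : ℕ} (M : Mat d) (v : Vec d) : Vec d := mkVec (fun i => ∑ j, M (i, j) * v j)

/-- The matrix with `(i,j)` entry `Σ_k A_{ki} B_{kj}`, i.e. `AᵀB`. -/
def matTProd {d : ℕ} (A B : Mat d) : Mat d := mkMat (fun ij => ∑ k, A (k, ij.1) * B (k, ij.2))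

/-- The identity matrix. -/
def idMat {d : ℕ} : Mat d := mkMat (fun ij => if ij.1 = ij.2 then (1 : ℝ) else 0)

/-- The contraction `F' G' 𝕏 := Σ_{k,i,j} F'_{ki} G'_{kj} 𝕏_{ij}`. -/
def ddContract {d : ℕ} (A B X : Mat d) : ℝ := ∑ k, ∑ i, ∑ j, A (k, i) * B (k, j) * X (i, j)

/-- The increment process `(s,t) ↦ X_t - X_s` of a path. -/
def inc {E : Type*} [AddCommGroup E] (X : ℝ → E) : ℝ → ℝ → E := fun s t => X t - X s

/-- A (finite) partition `s = τ_0 < τ_1 < ⋯ < τ_N = t` of the interval `[s,t]`. -/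
structure IntervalPartition (s t : ℝ) where
  N : ℕ
  τ : ℕ → ℝ
  Npos : 0 < N
  first : τ 0 = s
  last : τ N = t
  mono : ∀ k < N, τ k < τ (k + 1)

/-- The mesh of the partition is `< δ`. -/
def IntervalPartition.MeshLt {s t : ℝ} (P : IntervalPartition s t) (δ : ℝ) : Prop :=
  ∀ k < P.N, P.τ (k + 1) - P.τ k < δ

/-- The sum `Σ_{[u,v] ∈ P} |A_{u,v}|^p` along a partition `P`, for a two-parameter
function `A`. -/
def varSumOn {E : Type*} [NormedAddCommGroup E] (p : ℝ) (A : ℝ → ℝ → E)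
    {s t : ℝ} (P : IntervalPartition s t) : ℝ :=
  ∑ k ∈ Finset.range P.N, ‖A (P.τ k) (P.τ (k + 1))‖ ^ p

/-- The set of all sums `Σ_{[u,v] ∈ P} |A_{u,v}|^p` over partitions `P` of `[s,t]`. -/
def pVarSums {E : Type*} [NormedAddCommGroup E] (p : ℝ) (A : ℝ → ℝ → E) (s t : ℝ) : Set ℝ :=
  {x | ∃ P : IntervalPartition s t, x = varSumOn p A P}

/-- The `p`-variation `‖A‖_{p,[s,t]} := (sup_P Σ_{[u,v] ∈ P} |A_{u,v}|^p)^{1/p}` of a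
two-parameter function `A` (for a path `X`, apply this to `inc X`). -/
def pVar {E : Type*} [NormedAddCommGroup E] (p : ℝ) (A : ℝ → ℝ → E) (s t : ℝ) : ℝ :=
  sSup (pVarSums p A s t) ^ (1 / p)

/-- `A` has finite `p`-variation on `[s,t]`. -/
def HasBddPVar {E : Type*} [NormedAddCommGroup E] (p : ℝ) (A : ℝ → ℝ → E) (s t : ℝ) : Prop :=
  BddAbove (pVarSums p A s t)

/-- `f` is càdlàg on `[a,b]`: right-continuous on `[a,b)` with left limits on `(a,b]`. -/
def CadlagOn {E : Type*} [TopologicalSpace E] (f : ℝ → E) (a b : ℝ) : Prop :=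
  (∀ t ∈ Ico a b, Tendsto f (𝓝[>] t) (𝓝 (f t))) ∧
  (∀ t ∈ Ioc a b, ∃ l, Tendsto f (𝓝[<] t) (𝓝 l))

/-- The supremum norm of `f` on `[a,b]`. -/
def supNormOn {E : Type*} [NormedAddCommGroup E] (f : ℝ → E) (a b : ℝ) : ℝ :=
  sSup ((fun u => ‖f u‖) '' Icc a b)

/-- A control function on `Δ_{[0,T]}`: nonnegative and superadditive. -/
def IsControl (T : ℝ) (w : ℝ → ℝ → ℝ) : Prop :=
  (∀ ⦃s t : ℝ⦄, 0 ≤ s → s ≤ t → t ≤ T → 0 ≤ w s t) ∧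
  (∀ ⦃s u t : ℝ⦄, 0 ≤ s → s ≤ u → u ≤ t → t ≤ T → w s u + w u t ≤ w s t)

/-- The set of jump times of `f` in `(0,T]`. -/
def jumpSet {E : Type*} [TopologicalSpace E] (f : ℝ → E) (T : ℝ) : Set ℝ :=
  {u | u ∈ Ioc (0 : ℝ) T ∧ Function.leftLim f u ≠ f u}

/-- A càdlàg `p`-rough path `(X, Z, 𝕏)` over `ℝ^d` on `[0,T]`:
`X, Z ∈ D^p([0,T];ℝ^d)`, `𝕏 ∈ D^{p/2}_2(Δ_{[0,T]};ℝ^{d×d})`, and Chen's relation holds. -/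
structure IsRoughPath (d : ℕ) (p T : ℝ) (X Z : ℝ → Vec d) (XX : ℝ → ℝ → Mat d) : Prop where
  cadlagX : CadlagOn X 0 T
  cadlagZ : CadlagOn Z 0 T
  varX : HasBddPVar p (inc X) 0 T
  varZ : HasBddPVar p (inc Z) 0 T
  cadlagXX₁ : ∀ t ∈ Icc (0 : ℝ) T, CadlagOn (fun s => XX s t) 0 t
  cadlagXX₂ : ∀ s ∈ Icc (0 : ℝ) T, CadlagOn (fun t => XX s t) s T
  varXX : HasBddPVar (p / 2) XX 0 T
  chen : ∀ ⦃s u t : ℝ⦄, 0 ≤ s → s ≤ u → u ≤ t → t ≤ T →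
    XX s t = XX s u + XX u t + tensor (Z u - Z s) (X t - X u)

/-- The remainder `R^F_{s,t} := F_{s,t} - F'_s Z_{s,t}` of a controlled path. -/
def rem {d : ℕ} (Z F : ℝ → Vec d) (F' : ℝ → Mat d) : ℝ → ℝ → Vec d :=
  fun s t => F t - F s - matApply (F' s) (Z t - Z s)

/-- `(F, F')` is a controlled path in `𝒱^{q,r}_Z` on `[0,T]` (with `F ∈ D^p`):
`F ∈ D^p([0,T];ℝ^d)`, `F' ∈ D^q([0,T];L(ℝ^d,ℝ^d))` and `R^F ∈ D^r_2(Δ_{[0,T]};ℝ^d)`. -/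
structure IsControlledPath (d : ℕ) (p q r T : ℝ) (Z : ℝ → Vec d)
    (F : ℝ → Vec d) (F' : ℝ → Mat d) : Prop where
  cadlagF : CadlagOn F 0 T
  varF : HasBddPVar p (inc F) 0 T
  cadlagF' : CadlagOn F' 0 T
  varF' : HasBddPVar q (inc F') 0 T
  cadlagR₁ : ∀ t ∈ Icc (0 : ℝ) T, CadlagOn (fun s => rem Z F F' s t) 0 t
  cadlagR₂ : ∀ s ∈ Icc (0 : ℝ) T, CadlagOn (fun t => rem Z F F' s t) s T
  varR : HasBddPVar r (rem Z F F') 0 T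

/-- The controlled path norm `‖F,F'‖_{𝒱^{q,r}_Z,[0,T]} := |F'_0| + ‖F'‖_q + ‖R^F‖_r`. -/
def ctrlNorm {d : ℕ} (q r T : ℝ) (Z F : ℝ → Vec d) (F' : ℝ → Mat d) : ℝ :=
  ‖F' 0‖ + pVar q (inc F') 0 T + pVar r (rem Z F F') 0 T

/-- Compensated Riemann sum `Σ (⟨F_u, G_{u,v}⟩ + F'_u G'_u 𝕏_{u,v})` along a partition of `[0,t]`. -/
def compSum {d : ℕ} (F : ℝ → Vec d) (F' : ℝ → Mat d) (G : ℝ → Vec d) (G' : ℝ → Mat d)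
    (XX : ℝ → ℝ → Mat d) {t : ℝ} (P : IntervalPartition 0 t) : ℝ :=
  ∑ k ∈ Finset.range P.N,
    (⟪F (P.τ k), G (P.τ (k + 1)) - G (P.τ k)⟫_ℝ
      + ddContract (F' (P.τ k)) (G' (P.τ k)) (XX (P.τ k) (P.τ (k + 1))))

/-- `I` is the value at time `t` of the rough integral `∫₀ᵗ F dG`: the compensated Riemann
sums converge to `I` along every sequence of partitions of `[0,t]` with mesh tending to `0`. -/
def IsRoughIntegralAt {d : ℕ} (F : ℝ → Vec d) (F' : ℝ → Mat d) (G : ℝ → Vec d)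
    (G' : ℝ → Mat d) (XX : ℝ → ℝ → Mat d) (t : ℝ) (I : ℝ) : Prop :=
  ∀ ε > 0, ∃ δ > 0, ∀ P : IntervalPartition 0 t, P.MeshLt δ →
    |compSum F F' G G' XX P - I| < ε

/-- The rough path seminorm `‖X‖_{p,[0,T]} + ‖Z‖_{p,[0,T]} + ‖𝕏‖_{p/2,[0,T]}`. -/
def roughNorm {d : ℕ} (p T : ℝ) (X Z : ℝ → Vec d) (XX : ℝ → ℝ → Mat d) : ℝ :=
  pVar p (inc X) 0 T + pVar p (inc Z) 0 T + pVar (p / 2) XX 0 T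

/-- The rough path distance `‖X − X̃‖_p + ‖Z − Z̃‖_p + ‖𝕏 − 𝕏̃‖_{p/2}`. -/
def roughDist {d : ℕ} (p T : ℝ) (X Z X' Z' : ℝ → Vec d) (XX XX' : ℝ → ℝ → Mat d) : ℝ :=
  pVar p (inc (fun u => X u - X' u)) 0 T + pVar p (inc (fun u => Z u - Z' u)) 0 T
    + pVar (p / 2) (fun s t => XX s t - XX' s t) 0 T

/-- Left-point discretization of `S` along a single partition of `[a,b]`. -/
def IntervalPartition.disc {a b : ℝ} (P : IntervalPartition a b) {E : Type*}
    [NormedAddCommGroup E] (S : ℝ → E) (u : ℝ) : E :=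
  Set.indicator {b} S u
    + ∑ k ∈ Finset.range P.N,
        Set.indicator (Ico (P.τ k) (P.τ (k + 1))) (fun _ => S (P.τ k)) u


-- ## Auxiliary lemmas

lemma matApply_zero {d : ℕ} (M : Mat d) : matApply M 0 = 0 := by
  ext i
  simp [matApply, mkVec]

lemma matApply_sub_left {d : ℕ} (M M' : Mat d) (v : Vec d) :
    matApply (M - M') v = matApply M v - matApply M' v := by
  ext i
  simp [matApply, mkVec, sub_mul, Finset.sum_sub_distrib]

lemma norm_matApply_le {d : ℕ} (M : Mat d) (v : Vec d) :
    ‖matApply M v‖ ≤ ‖M‖ * ‖v‖ := by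
  have hM : ‖M‖ = Real.sqrt (∑ ij : Fin d × Fin d, ‖M ij‖ ^ 2) := EuclideanSpace.norm_eq M
  have hv : ‖v‖ = Real.sqrt (∑ j, ‖v j‖ ^ 2) := EuclideanSpace.norm_eq v
  have hMv : ‖matApply M v‖ = Real.sqrt (∑ i, ‖(matApply M v) i‖ ^ 2) :=
    EuclideanSpace.norm_eq _
  rw [hM, hv, hMv, ← Real.sqrt_mul (by positivity)]
  apply Real.sqrt_le_sqrt
  have key : ∀ i : Fin d, ‖(matApply M v) i‖ ^ 2 ≤
      (∑ j, ‖M (i, j)‖ ^ 2) * (∑ j, ‖v j‖ ^ 2) := by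
    intro i
    have : (matApply M v) i = ∑ j, M (i, j) * v j := rfl
    rw [this]
    have h := Finset.sum_mul_sq_le_sq_mul_sq Finset.univ (fun j => M (i, j)) (fun j => v j)
    calc ‖∑ j, M (i, j) * v j‖ ^ 2 = (∑ j, M (i, j) * v j) ^ 2 := by
          rw [Real.norm_eq_abs, sq_abs]
      _ ≤ (∑ j, M (i, j) ^ 2) * (∑ j, v j ^ 2) := h
      _ = (∑ j, ‖M (i, j)‖ ^ 2) * (∑ j, ‖v j‖ ^ 2) := by
          simp [Real.norm_eq_abs, sq_abs]
  calc (∑ i, ‖(matApply M v) i‖ ^ 2)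
      ≤ ∑ i, (∑ j, ‖M (i, j)‖ ^ 2) * (∑ j, ‖v j‖ ^ 2) := Finset.sum_le_sum (fun i _ => key i)
    _ = (∑ i, ∑ j, ‖M (i, j)‖ ^ 2) * (∑ j, ‖v j‖ ^ 2) := by rw [← Finset.sum_mul]
    _ = (∑ ij : Fin d × Fin d, ‖M ij‖ ^ 2) * (∑ j, ‖v j‖ ^ 2) := by
        rw [Fintype.sum_prod_type]

section scalar
variable {p q r : ℝ}

lemma young_pqr (hp0 : 0 < p) (hq0 : 0 < q) (hr0 : 0 < r) (hrp : r < p) (hrq : r < q)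
    (hr : 1 / r = 1 / p + 1 / q) {a b : ℝ} (ha : 0 ≤ a) (hb : 0 ≤ b) :
    a ^ r * b ^ r ≤ a ^ q + b ^ p := by
  have hconj : (q / r).HolderConjugate (p / r) := by
    constructor
    · have hp' : p ≠ 0 := hp0.ne'
      have hq' : q ≠ 0 := hq0.ne'
      have hr' : r ≠ 0 := hr0.ne'
      field_simp at hr ⊢
      nlinarith [hr, mul_pos hp0 hq0]
    · positivity
    · positivity
  have h := Real.young_inequality_of_nonneg (a := a ^ r) (b := b ^ r)
      (Real.rpow_nonneg ha r) (Real.rpow_nonneg hb r) hconj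
  have e1 : (a ^ r) ^ (q / r) = a ^ q := by
    rw [← Real.rpow_mul ha]; congr 1; field_simp
  have e2 : (b ^ r) ^ (p / r) = b ^ p := by
    rw [← Real.rpow_mul hb]; congr 1; field_simp
  rw [e1, e2] at h
  have h1 : a ^ q / (q / r) ≤ a ^ q := by
    apply div_le_self (Real.rpow_nonneg ha q)
    rw [le_div_iff₀ hr0]; linarith
  have h2 : b ^ p / (p / r) ≤ b ^ p := by
    apply div_le_self (Real.rpow_nonneg hb p)
    rw [le_div_iff₀ hr0]; linarith
  linarith

lemma add_rpow_le (hr0 : 0 < r) {a b : ℝ} (ha : 0 ≤ a) (hb : 0 ≤ b) :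
    (a + b) ^ r ≤ 2 ^ r * (a ^ r + b ^ r) := by
  have h1 : a + b ≤ 2 * max a b := by
    rcases le_total a b with h | h
    · simp [max_eq_right h]; linarith
    · simp [max_eq_left h]; linarith
  have h2 : (a + b) ^ r ≤ (2 * max a b) ^ r :=
    Real.rpow_le_rpow (by linarith) h1 hr0.le
  have h3 : (2 * max a b) ^ r = 2 ^ r * (max a b) ^ r :=
    Real.mul_rpow (by norm_num) (le_max_of_le_left ha)
  have h4 : (max a b) ^ r ≤ a ^ r + b ^ r := by
    rcases le_total a b with h | h
    · rw [max_eq_right h]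
      have := Real.rpow_nonneg ha r
      linarith
    · rw [max_eq_left h]
      have := Real.rpow_nonneg hb r
      linarith
  calc (a + b) ^ r ≤ 2 ^ r * (max a b) ^ r := by rw [← h3]; exact h2
    _ ≤ 2 ^ r * (a ^ r + b ^ r) := by
        apply mul_le_mul_of_nonneg_left h4 (Real.rpow_nonneg (by norm_num) r)

end scalar

-- ## Partition basics

lemma IntervalPartition.tau_lt_tau {s t : ℝ} (P : IntervalPartition s t) :
    ∀ {j k : ℕ}, j < k → k ≤ P.N → P.τ j < P.τ k := by
  intro j k
  induction k with
  | zero => omega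
  | succ n ih =>
    intro h1 h2
    rcases Nat.lt_succ_iff_lt_or_eq.mp h1 with h | h
    · exact lt_trans (ih h (by omega)) (P.mono n (by omega))
    · subst h; exact P.mono j (by omega)

lemma IntervalPartition.tau_le_tau {s t : ℝ} (P : IntervalPartition s t)
    {j k : ℕ} (h : j ≤ k) (hk : k ≤ P.N) : P.τ j ≤ P.τ k := by
  rcases Nat.lt_or_ge j k with h' | h'
  · exact (P.tau_lt_tau h' hk).le
  · have : j = k := le_antisymm h h'
    simp [this]

lemma IntervalPartition.tau_mem {s t : ℝ} (P : IntervalPartition s t)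
    {k : ℕ} (hk : k ≤ P.N) : P.τ k ∈ Icc s t := by
  have h1 := P.tau_le_tau (Nat.zero_le k) hk
  have h2 := P.tau_le_tau hk (le_refl P.N)
  rw [P.first] at h1
  rw [P.last] at h2
  exact ⟨h1, h2⟩

/-- The one-interval partition of `[0,T]`. -/
def onePart {T : ℝ} (hT : 0 < T) : IntervalPartition 0 T where
  N := 1
  τ := fun k => if k = 0 then 0 else T
  Npos := one_pos
  first := by simp
  last := by simp
  mono := by
    intro k hk
    have : k = 0 := by omega
    simp [this, hT]

lemma varSumOn_nonneg {E : Type*} [NormedAddCommGroup E] (ρ : ℝ) (A : ℝ → ℝ → E)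
    {s t : ℝ} (P : IntervalPartition s t) : 0 ≤ varSumOn ρ A P :=
  Finset.sum_nonneg fun _ _ => Real.rpow_nonneg (norm_nonneg _) _

lemma sSup_pVarSums_nonneg {E : Type*} [NormedAddCommGroup E] (ρ : ℝ) (A : ℝ → ℝ → E)
    {T : ℝ} (hT : 0 < T) (hbdd : BddAbove (pVarSums ρ A 0 T)) :
    0 ≤ sSup (pVarSums ρ A 0 T) :=
  le_trans (varSumOn_nonneg ρ A (onePart hT)) (le_csSup hbdd ⟨onePart hT, rfl⟩)

lemma pVar_rpow_eq {E : Type*} [NormedAddCommGroup E] {ρ : ℝ} (hρ : 0 < ρ) (A : ℝ → ℝ → E)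
    {T : ℝ} (hT : 0 < T) (hbdd : BddAbove (pVarSums ρ A 0 T)) :
    pVar ρ A 0 T ^ ρ = sSup (pVarSums ρ A 0 T) := by
  unfold pVar
  rw [← Real.rpow_mul (sSup_pVarSums_nonneg ρ A hT hbdd)]
  rw [one_div, inv_mul_cancel₀ hρ.ne', Real.rpow_one]

lemma pVar_nonneg {E : Type*} [NormedAddCommGroup E] (ρ : ℝ) (A : ℝ → ℝ → E)
    (s t : ℝ) : 0 ≤ pVar ρ A s t := by
  unfold pVar
  have h : ∀ x ∈ pVarSums ρ A s t, 0 ≤ x := by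
    rintro x ⟨P, rfl⟩; exact varSumOn_nonneg ρ A P
  exact Real.rpow_nonneg (Real.sSup_nonneg h) _

/-- Key lemma: a sum of `‖A‖^ρ` increments along a monotone (not necessarily strictly
monotone) chain from `0` to `T` is bounded by the supremum of partition sums. -/
lemma chain_sum_le {E : Type*} [NormedAddCommGroup E] {ρ : ℝ} (hρ : 0 < ρ)
    (A : ℝ → ℝ → E) (hA : ∀ u, A u u = 0) {T : ℝ} (hT : 0 < T)
    (hbdd : BddAbove (pVarSums ρ A 0 T)) :
    ∀ M : ℕ, ∀ c : ℕ → ℝ, c 0 = 0 → c M = T → (∀ k < M, c k ≤ c (k + 1)) →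
      ∑ k ∈ Finset.range M, ‖A (c k) (c (k + 1))‖ ^ ρ ≤ sSup (pVarSums ρ A 0 T) := by
  intro M
  induction M using Nat.strong_induction_on with
  | _ M ih =>
    intro c h0 hM hmono
    have hM0 : 0 < M := by
      by_contra h
      have : M = 0 := by omega
      rw [this] at hM; rw [h0] at hM; linarith
    by_cases hstrict : ∀ k < M, c k < c (k + 1)
    · -- strictly monotone chain: it is a partition
      set P : IntervalPartition 0 T := ⟨M, c, hM0, h0, hM, hstrict⟩ with hP
      have : ∑ k ∈ Finset.range M, ‖A (c k) (c (k + 1))‖ ^ ρ = varSumOn ρ A P := rfl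
      rw [this]
      exact le_csSup hbdd ⟨P, rfl⟩
    · -- some step is degenerate: remove it and use the induction hypothesis
      push_neg at hstrict
      obtain ⟨k, hkM, hk⟩ := hstrict
      have hkeq : c k = c (k + 1) := le_antisymm (hmono k hkM) hk
      set c' : ℕ → ℝ := fun j => if j < k then c j else c (j + 1) with hc'
      have hc'j : ∀ j, c' j = c (if j < k then j else j + 1) := by
        intro j; simp only [hc']; split <;> rfl
      have hc'succ : ∀ j, j < M - 1 → c' (j + 1) = c ((if j < k then j else j + 1) + 1) := by
        intro j hj
        simp only [hc']
        rcases lt_trichotomy (j + 1) k with h | h | h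
        · simp only [if_pos h, if_pos (by omega : j < k)]
        · subst h
          rw [if_neg (by omega), if_pos (by omega)]
          exact hkeq.symm
        · rw [if_neg (by omega), if_neg (by omega)]
      have key : ∑ j ∈ Finset.range (M - 1), ‖A (c' j) (c' (j + 1))‖ ^ ρ
          = ∑ j ∈ Finset.range M, ‖A (c j) (c (j + 1))‖ ^ ρ := by
        have hzero : ‖A (c k) (c (k + 1))‖ ^ ρ = 0 := by
          rw [← hkeq, hA, norm_zero, Real.zero_rpow hρ.ne']
        rw [← Finset.add_sum_erase _ _ (Finset.mem_range.mpr hkM), hzero, zero_add]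
        apply Finset.sum_nbij' (i := fun j => if j < k then j else j + 1)
          (j := fun j => if j < k then j else j - 1)
        · intro j hj
          simp only [Finset.mem_range] at hj
          simp only [Finset.mem_erase, Finset.mem_range]
          split <;> omega
        · intro j hj
          simp only [Finset.mem_erase, Finset.mem_range] at hj
          simp only [Finset.mem_range]
          split <;> omega
        · intro j hj; simp only [Finset.mem_range] at hj; split <;> (try split) <;> omega
        · intro j hj
          simp only [Finset.mem_erase, Finset.mem_range] at hj
          split <;> (try split) <;> omega
        · intro j hj
          simp only [Finset.mem_range] at hj
          rw [hc'j j, hc'succ j hj]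
      rw [← key]
      apply ih (M - 1) (by omega) c'
      · rw [hc'j 0]
        split
        · exact h0
        · have : k = 0 := by omega
          rw [this] at hkeq; rw [← hkeq]; exact h0
      · rw [hc'j (M - 1), if_neg (by omega)]
        have : M - 1 + 1 = M := by omega
        rw [this, hM]
      · intro j hj
        rw [hc'j j, hc'succ j hj]
        split
        · exact hmono j (by omega)
        · exact hmono (j + 1) (by omega)

-- ## The left-endpoint projection of a partition

/-- Index of the partition interval containing `u`. -/
def lidx {T : ℝ} (P : IntervalPartition 0 T) (u : ℝ) : ℕ :=
  Nat.findGreatest (fun k => P.τ k ≤ u) P.N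

/-- Left endpoint of the partition interval containing `u`. -/
def lpt {T : ℝ} (P : IntervalPartition 0 T) (u : ℝ) : ℝ := P.τ (lidx P u)

lemma lidx_le {T : ℝ} (P : IntervalPartition 0 T) (u : ℝ) : lidx P u ≤ P.N :=
  by unfold lidx; exact Nat.findGreatest_le P.N

lemma lpt_le {T : ℝ} (P : IntervalPartition 0 T) {u : ℝ} (hu : 0 ≤ u) : lpt P u ≤ u := by
  have h0 : P.τ 0 ≤ u := by rw [P.first]; exact hu
  exact Nat.findGreatest_spec (P := fun k => P.τ k ≤ u) (Nat.zero_le P.N) h0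

lemma lpt_nonneg {T : ℝ} (P : IntervalPartition 0 T) (u : ℝ) : 0 ≤ lpt P u :=
  (P.tau_mem (lidx_le P u)).1

lemma lidx_mono {T : ℝ} (P : IntervalPartition 0 T) {u v : ℝ} (huv : u ≤ v) :
    lidx P u ≤ lidx P v :=
  Nat.findGreatest_mono (P := fun k => P.τ k ≤ u) (Q := fun k => P.τ k ≤ v)
    (fun _ h => le_trans h huv) le_rfl

lemma lpt_mono {T : ℝ} (P : IntervalPartition 0 T) {u v : ℝ} (huv : u ≤ v) :
    lpt P u ≤ lpt P v :=
  P.tau_le_tau (lidx_mono P huv) (lidx_le P v)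

lemma lidx_lt_N {T : ℝ} (P : IntervalPartition 0 T) {u : ℝ} (hu0 : 0 ≤ u) (hu : u < T) :
    lidx P u < P.N := by
  rcases Nat.lt_or_ge (lidx P u) P.N with h | h
  · exact h
  · exfalso
    have heq : lidx P u = P.N := le_antisymm (lidx_le P u) h
    have hspec : P.τ (lidx P u) ≤ u := lpt_le P hu0
    rw [heq, P.last] at hspec
    linarith

lemma lt_lpt_succ {T : ℝ} (P : IntervalPartition 0 T) {u : ℝ} (hu0 : 0 ≤ u) (hu : u < T) :
    u < P.τ (lidx P u + 1) := by
  have h1 : lidx P u < P.N := lidx_lt_N P hu0 hu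
  have h2 : ¬ P.τ (lidx P u + 1) ≤ u :=
    Nat.findGreatest_is_greatest (P := fun k => P.τ k ≤ u) (Nat.lt_succ_self (lidx P u))
      (by omega)
  exact lt_of_not_ge h2

lemma lpt_T {T : ℝ} (P : IntervalPartition 0 T) : lpt P T = T := by
  have h1 : lidx P T = P.N := by
    have h2 : P.N ≤ lidx P T :=
      Nat.le_findGreatest (P := fun k => P.τ k ≤ T) le_rfl (by show P.τ P.N ≤ T; rw [P.last])
    exact le_antisymm (lidx_le P T) h2
  rw [lpt, h1, P.last]

lemma lpt_zero {T : ℝ} (P : IntervalPartition 0 T) : lpt P 0 = 0 :=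
  le_antisymm (lpt_le P le_rfl) (lpt_nonneg P 0)

/-- The crucial gap fact: if `lpt u < lpt v` then `u < lpt v`. -/
lemma lt_lpt_of_lpt_lt {T : ℝ} (P : IntervalPartition 0 T) {u v : ℝ}
    (h : lpt P u < lpt P v) : u < lpt P v := by
  by_contra hle
  push_neg at hle
  have h1 : lidx P v ≤ lidx P u :=
    Nat.le_findGreatest (P := fun k => P.τ k ≤ u) (lidx_le P v) hle
  have h2 : lpt P v ≤ lpt P u := P.tau_le_tau h1 (lidx_le P u)
  linarith

/-- The discretization of `S` along `P` is `S ∘ lpt P` on `[0,T]`. -/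
lemma disc_eq_lpt {T : ℝ} (P : IntervalPartition 0 T) {E : Type*}
    [NormedAddCommGroup E] (S : ℝ → E) {u : ℝ} (hu : u ∈ Icc 0 T) :
    P.disc S u = S (lpt P u) := by
  rcases eq_or_lt_of_le hu.2 with hT | hT
  · -- u = T
    subst hT
    rw [IntervalPartition.disc]
    have h1 : ∀ k ∈ Finset.range P.N,
        Set.indicator (Ico (P.τ k) (P.τ (k + 1))) (fun _ => S (P.τ k)) u = 0 := by
      intro k hk
      apply Set.indicator_of_notMem
      intro hmem
      have : P.τ (k + 1) ≤ u := (P.tau_mem (by simpa using Finset.mem_range.mp hk)).2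
      exact absurd hmem.2 (not_lt.mpr this)
    rw [Finset.sum_congr rfl h1]
    simp [lpt_T P]
  · -- u < T
    rw [IntervalPartition.disc]
    have h0 : Set.indicator ({T} : Set ℝ) S u = 0 :=
      Set.indicator_of_notMem (by simp [ne_of_lt hT]) S
    rw [h0, zero_add]
    rw [Finset.sum_eq_single (lidx P u)]
    · exact Set.indicator_of_mem
        (mem_Ico.mpr ⟨lpt_le P hu.1, lt_lpt_succ P hu.1 hT⟩) _
    · intro k hk hne
      apply Set.indicator_of_notMem
      intro hmem
      rcases Nat.lt_or_ge k (lidx P u) with h | h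
      · have : P.τ (k + 1) ≤ P.τ (lidx P u) := P.tau_le_tau (by omega) (lidx_le P u)
        have h2 : P.τ (lidx P u) ≤ u := lpt_le P hu.1
        exact absurd hmem.2 (not_lt.mpr (le_trans this h2))
      · have hgt : lidx P u < k := lt_of_le_of_ne h (fun h' => hne h'.symm)
        have h1 : P.τ (lidx P u + 1) ≤ P.τ k :=
          P.tau_le_tau (by omega) (le_of_lt (Finset.mem_range.mp hk))
        have h2 : u < P.τ (lidx P u + 1) := lt_lpt_succ P hu.1 hT
        exact absurd hmem.1 (not_le.mpr (lt_of_lt_of_le h2 h1))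
    · intro h
      exact absurd (Finset.mem_range.mpr (lidx_lt_N P hu.1 hT)) h

lemma rem_self {d : ℕ} (Z F : ℝ → Vec d) (F' : ℝ → Mat d) (u : ℝ) :
    rem Z F F' u u = 0 := by
  simp [rem, sub_self, matApply_zero]

lemma inc_self {E : Type*} [AddCommGroup E] (X : ℝ → E) (u : ℝ) : inc X u u = 0 := by
  simp [inc]

set_option maxHeartbeats 1000000 in
/-- **Uniform `r`-variation bound on the discretized remainders** (from the proof of
Theorem 2.?).  For `(F,F') ∈ 𝒱^{q,r}_S` and partitions `P^n` of `[0,T]`, the remainders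
`R^n_{s,t} := F^n_{s,t} − F'_s S^n_{s,t}` of the discretizations satisfy
`Σ_{[s,t] ∈ P} |R^n_{s,t}|^r ≤ C(‖R‖_r^r + ‖F'‖_q^q + ‖S‖_p^p)` for every partition `P`
of `[0,T]`, with `C` depending only on `p, q, r`; in particular `‖R^n‖_{r,[0,T]}` is
bounded uniformly in `n`. -/
theorem discretized_remainder_uniform_bound
    (p q r : ℝ) (hp : 2 < p) (hp' : p < 3) (hq : p ≤ q) (hpq : 2 / p + 1 / q > 1)
    (hr : 1 / r = 1 / p + 1 / q) :
    ∃ C : ℝ, 0 < C ∧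
      ∀ (d : ℕ) (T : ℝ), 0 < T →
      ∀ (S F : ℝ → Vec d) (F' : ℝ → Mat d),
        CadlagOn S 0 T → HasBddPVar p (inc S) 0 T →
        IsControlledPath d p q r T S F F' →
        ∀ P : ℕ → IntervalPartition (0 : ℝ) T, ∀ n : ℕ,
          (∀ Q : IntervalPartition (0 : ℝ) T,
            varSumOn r
              (fun s t => ((P n).disc F t - (P n).disc F s)
                              - matApply (F' s) ((P n).disc S t - (P n).disc S s)) Q
              ≤ C * (pVar r (rem S F F') 0 T ^ r + pVar q (inc F') 0 T ^ q
                      + pVar p (inc S) 0 T ^ p)) ∧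
          pVar r
              (fun s t => ((P n).disc F t - (P n).disc F s)
                              - matApply (F' s) ((P n).disc S t - (P n).disc S s)) 0 T ^ r
            ≤ C * (pVar r (rem S F F') 0 T ^ r + pVar q (inc F') 0 T ^ q
                    + pVar p (inc S) 0 T ^ p) := by
  have hp0 : 0 < p := by linarith
  have hq0 : 0 < q := by linarith
  have hr0 : 0 < r := by
    have h1 : 0 < 1 / p + 1 / q := by positivity
    rw [← hr] at h1
    exact one_div_pos.mp h1
  have hrp : r < p := by
    have h2 : 0 < 1 / q := by positivity
    have h1 : 1 / p < 1 / r := by rw [hr]; linarith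
    exact lt_of_one_div_lt_one_div hp0 h1
  have hrq : r < q := by
    have h2 : 0 < 1 / p := by positivity
    have h1 : 1 / q < 1 / r := by rw [hr]; linarith
    exact lt_of_one_div_lt_one_div hq0 h1
  refine ⟨2 ^ r, Real.rpow_pos_of_pos two_pos r, ?_⟩
  intro d T hT S F F' hcad hS hctrl P n
  set Pn := P n with hPn
  set Rn : ℝ → ℝ → Vec d := fun s t =>
    (Pn.disc F t - Pn.disc F s) - matApply (F' s) (Pn.disc S t - Pn.disc S s) with hRn
  have hbr : BddAbove (pVarSums r (rem S F F') 0 T) := hctrl.varR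
  have hbq : BddAbove (pVarSums q (inc F') 0 T) := hctrl.varF'
  have hbp : BddAbove (pVarSums p (inc S) 0 T) := hS
  set Vr := sSup (pVarSums r (rem S F F') 0 T) with hVrdef
  set Vq := sSup (pVarSums q (inc F') 0 T) with hVqdef
  set Vp := sSup (pVarSums p (inc S) 0 T) with hVpdef
  have hVr : pVar r (rem S F F') 0 T ^ r = Vr := pVar_rpow_eq hr0 _ hT hbr
  have hVq : pVar q (inc F') 0 T ^ q = Vq := pVar_rpow_eq hq0 _ hT hbq
  have hVp : pVar p (inc S) 0 T ^ p = Vp := pVar_rpow_eq hp0 _ hT hbp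
  have hVr0 : 0 ≤ Vr := sSup_pVarSums_nonneg r _ hT hbr
  have hVq0 : 0 ≤ Vq := sSup_pVarSums_nonneg q _ hT hbq
  have hVp0 : 0 ≤ Vp := sSup_pVarSums_nonneg p _ hT hbp
  have h2r0 : (0:ℝ) ≤ 2 ^ r := Real.rpow_nonneg (by norm_num) r
  -- the main uniform estimate along an arbitrary test partition Q
  have main : ∀ Q : IntervalPartition (0:ℝ) T, varSumOn r Rn Q ≤ 2 ^ r * (Vr + Vq + Vp) := by
    intro Q
    set c : ℕ → ℝ := fun k => lpt Pn (Q.τ k) with hc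
    have hc0 : c 0 = 0 := by simp only [hc]; rw [Q.first, lpt_zero]
    have hcM : c Q.N = T := by simp only [hc]; rw [Q.last, lpt_T]
    have hcmono : ∀ k < Q.N, c k ≤ c (k + 1) := by
      intro k hk
      exact lpt_mono Pn (Q.tau_le_tau (Nat.le_succ k) hk)
    set e : ℕ → ℝ := fun j => if j % 2 = 0 then c (j / 2)
      else (if c (j / 2) < c (j / 2 + 1) then Q.τ (j / 2) else c (j / 2 + 1)) with he
    have he2k : ∀ k, e (2 * k) = c k := by
      intro k
      have h1 : (2 * k) % 2 = 0 := by omega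
      have h2 : (2 * k) / 2 = k := by omega
      simp only [he, h1, h2, if_true]
    have he2k1 : ∀ k, e (2 * k + 1) = if c k < c (k + 1) then Q.τ k else c (k + 1) := by
      intro k
      have h1 : (2 * k + 1) % 2 = 1 := by omega
      have h2 : (2 * k + 1) / 2 = k := by omega
      simp only [he, h1, h2]
      norm_num
    have he0 : e 0 = 0 := by
      have : (0:ℕ) = 2 * 0 := rfl
      rw [this, he2k 0, hc0]
    have heM : e (2 * Q.N) = T := by rw [he2k Q.N, hcM]
    have hemono : ∀ j < 2 * Q.N, e j ≤ e (j + 1) := by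
      intro j hj
      rcases Nat.even_or_odd j with ⟨k, hk⟩ | ⟨k, hk⟩
      · have hk' : j = 2 * k := by omega
        subst hk'
        have hkN : k < Q.N := by omega
        rw [he2k k, he2k1 k]
        split_ifs with h
        · exact lpt_le Pn (Q.tau_mem hkN.le).1
        · exact hcmono k hkN
      · have hk' : j = 2 * k + 1 := by omega
        subst hk'
        have hkN : k < Q.N := by omega
        have hsucc : 2 * k + 1 + 1 = 2 * (k + 1) := by omega
        rw [hsucc, he2k (k + 1), he2k1 k]
        split_ifs with h
        · exact (lt_lpt_of_lpt_lt Pn h).le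
        · exact le_rfl
    have S1 : ∑ k ∈ Finset.range Q.N, ‖rem S F F' (c k) (c (k + 1))‖ ^ r ≤ Vr :=
      chain_sum_le hr0 _ (rem_self S F F') hT hbr Q.N c hc0 hcM hcmono
    have S3 : ∑ k ∈ Finset.range Q.N, ‖inc S (c k) (c (k + 1))‖ ^ p ≤ Vp :=
      chain_sum_le hp0 _ (inc_self S) hT hbp Q.N c hc0 hcM hcmono
    have S2' : ∑ j ∈ Finset.range (2 * Q.N), ‖inc F' (e j) (e (j + 1))‖ ^ q ≤ Vq :=
      chain_sum_le hq0 _ (inc_self F') hT hbq (2 * Q.N) e he0 heM hemono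
    have S2 : ∑ k ∈ Finset.range Q.N, ‖inc F' (e (2 * k)) (e (2 * k + 1))‖ ^ q ≤ Vq := by
      refine le_trans ?_ S2'
      have hinj : ∀ x ∈ Finset.range Q.N, ∀ y ∈ Finset.range Q.N,
          2 * x = 2 * y → x = y := by intro x _ y _ h; omega
      have himg : ∑ j ∈ (Finset.range Q.N).image (fun k => 2 * k),
          ‖inc F' (e j) (e (j + 1))‖ ^ q
          = ∑ k ∈ Finset.range Q.N, ‖inc F' (e (2 * k)) (e (2 * k + 1))‖ ^ q :=
        Finset.sum_image hinj
      rw [← himg]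
      apply Finset.sum_le_sum_of_subset_of_nonneg
      · intro j hj
        simp only [Finset.mem_image, Finset.mem_range] at hj ⊢
        obtain ⟨k, hk, rfl⟩ := hj
        omega
      · intro j _ _
        exact Real.rpow_nonneg (norm_nonneg _) q
    -- pointwise estimate
    have hptwise : ∀ k < Q.N, ‖Rn (Q.τ k) (Q.τ (k + 1))‖ ^ r ≤
        2 ^ r * (‖rem S F F' (c k) (c (k + 1))‖ ^ r
          + ‖inc F' (e (2 * k)) (e (2 * k + 1))‖ ^ q
          + ‖inc S (c k) (c (k + 1))‖ ^ p) := by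
      intro k hk
      have hsm : Q.τ k ∈ Icc (0:ℝ) T := Q.tau_mem hk.le
      have htm : Q.τ (k + 1) ∈ Icc (0:ℝ) T := Q.tau_mem hk
      have hdF2 : Pn.disc F (Q.τ (k + 1)) = F (c (k + 1)) := disc_eq_lpt Pn F htm
      have hdF1 : Pn.disc F (Q.τ k) = F (c k) := disc_eq_lpt Pn F hsm
      have hdS2 : Pn.disc S (Q.τ (k + 1)) = S (c (k + 1)) := disc_eq_lpt Pn S htm
      have hdS1 : Pn.disc S (Q.τ k) = S (c k) := disc_eq_lpt Pn S hsm
      have hdecomp : Rn (Q.τ k) (Q.τ (k + 1)) =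
          rem S F F' (c k) (c (k + 1))
            + matApply (F' (c k) - F' (Q.τ k)) (S (c (k + 1)) - S (c k)) := by
        simp only [hRn]
        rw [hdF1, hdF2, hdS1, hdS2, matApply_sub_left]
        simp only [rem]
        abel
      set a := ‖rem S F F' (c k) (c (k + 1))‖ with ha
      have ha0 : 0 ≤ a := norm_nonneg _
      have hC1 : (1:ℝ) ≤ 2 ^ r := Real.one_le_rpow one_le_two hr0.le
      have hEq0 : 0 ≤ ‖inc F' (e (2 * k)) (e (2 * k + 1))‖ ^ q :=
        Real.rpow_nonneg (norm_nonneg _) q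
      have hEp0 : 0 ≤ ‖inc S (c k) (c (k + 1))‖ ^ p :=
        Real.rpow_nonneg (norm_nonneg _) p
      have har0 : 0 ≤ a ^ r := Real.rpow_nonneg ha0 r
      by_cases hact : c k < c (k + 1)
      · set b := ‖inc F' (e (2 * k)) (e (2 * k + 1))‖ with hb
        set s' := ‖inc S (c k) (c (k + 1))‖ with hs'
        have hb0 : 0 ≤ b := norm_nonneg _
        have hs'0 : 0 ≤ s' := norm_nonneg _
        have hmb : ‖matApply (F' (c k) - F' (Q.τ k)) (S (c (k + 1)) - S (c k))‖ ≤ b * s' := by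
          calc ‖matApply (F' (c k) - F' (Q.τ k)) (S (c (k + 1)) - S (c k))‖
              ≤ ‖F' (c k) - F' (Q.τ k)‖ * ‖S (c (k + 1)) - S (c k)‖ := norm_matApply_le _ _
            _ = b * s' := by
                rw [hb, hs', he2k k, he2k1 k, if_pos hact]
                simp only [inc]
                rw [norm_sub_rev (F' (Q.τ k)) (F' (c k))]
        have hnorm : ‖Rn (Q.τ k) (Q.τ (k + 1))‖ ≤ a + b * s' := by
          rw [hdecomp]
          refine le_trans (norm_add_le _ _) ?_
          exact add_le_add le_rfl hmb
        have h1 : ‖Rn (Q.τ k) (Q.τ (k + 1))‖ ^ r ≤ (a + b * s') ^ r :=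
          Real.rpow_le_rpow (norm_nonneg _) hnorm hr0.le
        have h2 : (a + b * s') ^ r ≤ 2 ^ r * (a ^ r + (b * s') ^ r) :=
          add_rpow_le hr0 ha0 (mul_nonneg hb0 hs'0)
        have h3 : (b * s') ^ r = b ^ r * s' ^ r := Real.mul_rpow hb0 hs'0
        have h4 : b ^ r * s' ^ r ≤ b ^ q + s' ^ p :=
          young_pqr hp0 hq0 hr0 hrp hrq hr hb0 hs'0
        calc ‖Rn (Q.τ k) (Q.τ (k + 1))‖ ^ r ≤ 2 ^ r * (a ^ r + (b * s') ^ r) :=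
              le_trans h1 h2
          _ ≤ 2 ^ r * (a ^ r + b ^ q + s' ^ p) := by
              rw [h3]
              apply mul_le_mul_of_nonneg_left _ h2r0
              linarith
          _ = 2 ^ r * (a ^ r + b ^ q + s' ^ p) := rfl
      · have hceq : c k = c (k + 1) := le_antisymm (hcmono k hk) (not_lt.mp hact)
        have hSz : S (c (k + 1)) - S (c k) = 0 := by rw [hceq, sub_self]
        have hRz : Rn (Q.τ k) (Q.τ (k + 1)) = rem S F F' (c k) (c (k + 1)) := by
          rw [hdecomp, hSz, matApply_zero, add_zero]
        rw [hRz]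
        calc a ^ r ≤ 2 ^ r * a ^ r := le_mul_of_one_le_left har0 hC1
          _ ≤ _ := by
              apply mul_le_mul_of_nonneg_left _ h2r0
              linarith
    -- summing up
    have hsum : varSumOn r Rn Q ≤ 2 ^ r * ((∑ k ∈ Finset.range Q.N,
          ‖rem S F F' (c k) (c (k + 1))‖ ^ r)
        + (∑ k ∈ Finset.range Q.N, ‖inc F' (e (2 * k)) (e (2 * k + 1))‖ ^ q)
        + (∑ k ∈ Finset.range Q.N, ‖inc S (c k) (c (k + 1))‖ ^ p)) := by
      rw [varSumOn]
      calc ∑ k ∈ Finset.range Q.N, ‖Rn (Q.τ k) (Q.τ (k + 1))‖ ^ r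
          ≤ ∑ k ∈ Finset.range Q.N, 2 ^ r * (‖rem S F F' (c k) (c (k + 1))‖ ^ r
              + ‖inc F' (e (2 * k)) (e (2 * k + 1))‖ ^ q
              + ‖inc S (c k) (c (k + 1))‖ ^ p) :=
            Finset.sum_le_sum fun k hk => hptwise k (Finset.mem_range.mp hk)
        _ = _ := by rw [← Finset.mul_sum, Finset.sum_add_distrib, Finset.sum_add_distrib]
    refine le_trans hsum ?_
    apply mul_le_mul_of_nonneg_left _ h2r0
    linarith
  constructor
  · intro Q
    rw [hVr, hVq, hVp]
    exact main Q
  · rw [hVr, hVq, hVp]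
    have hball : ∀ x ∈ pVarSums r Rn 0 T, x ≤ 2 ^ r * (Vr + Vq + Vp) := by
      rintro x ⟨Q, rfl⟩
      exact main Q
    have hbdd2 : BddAbove (pVarSums r Rn 0 T) := ⟨_, hball⟩
    rw [pVar_rpow_eq hr0 Rn hT hbdd2]
    exact Real.sSup_le hball (by positivity)
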